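/- Let n ≥ 1 and 0 ≤ α < n. Let b : ℝⁿ → ℝ and f : ℝⁿ → ℝ be locally integrable. Then for every x ∈ ℝⁿ such that M_α f(x) < ∞ and M_{α,b} f(x) < ∞, one has | b(x) M_α f(x) − M_α(b f)(x) | ≤ M_{α,b} f(x) + 2 b⁻(x) M_α f(x). -/

import Mathlib

open MeasureTheory Metric Set
open scoped ENNReal NNReal

/-- The fractional maximal function `M_α f` on `ℝⁿ`:
`M_α f (x) = sup_{B ∋ x} |B|^{α/n - 1} ∫_B |f|`. -/
noncomputable def fracMax (n : ℕ) (α : ℝ) (f : EuclideanSpace ℝ (Fin n) → ℝ)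
    (x : EuclideanSpace ℝ (Fin n)) : ℝ≥0∞ :=
  ⨆ (c : EuclideanSpace ℝ (Fin n)) (r : ℝ) (_ : 0 < r) (_ : x ∈ ball c r),
    volume (ball c r) ^ (α / n - 1) * ∫⁻ y in ball c r, (‖f y‖₊ : ℝ≥0∞)

/-- The fractional maximal commutator `M_{α,b} f`:
`M_{α,b} f (x) = sup_{B ∋ x} |B|^{α/n - 1} ∫_B |b(x) - b(y)| |f(y)| dy`. -/
noncomputable def fracMaxComm (n : ℕ) (α : ℝ) (b f : EuclideanSpace ℝ (Fin n) → ℝ)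
    (x : EuclideanSpace ℝ (Fin n)) : ℝ≥0∞ :=
  ⨆ (c : EuclideanSpace ℝ (Fin n)) (r : ℝ) (_ : 0 < r) (_ : x ∈ ball c r),
    volume (ball c r) ^ (α / n - 1) *
      ∫⁻ y in ball c r, (‖b x - b y‖₊ : ℝ≥0∞) * (‖f y‖₊ : ℝ≥0∞)

/-- The local fractional maximal function `M_{α,B₀} f`, supremum over balls `B` with
`x ∈ B ⊆ B₀`. For `α = 0` this is the local Hardy–Littlewood maximal function `M_{B₀}`. -/
noncomputable def fracMaxLocal (n : ℕ) (α : ℝ) (B₀ : Set (EuclideanSpace ℝ (Fin n)))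
    (f : EuclideanSpace ℝ (Fin n) → ℝ) (x : EuclideanSpace ℝ (Fin n)) : ℝ≥0∞ :=
  ⨆ (c : EuclideanSpace ℝ (Fin n)) (r : ℝ) (_ : 0 < r) (_ : x ∈ ball c r)
    (_ : ball c r ⊆ B₀),
    volume (ball c r) ^ (α / n - 1) * ∫⁻ y in ball c r, (‖f y‖₊ : ℝ≥0∞)

/-- The average `b_B = |B|⁻¹ ∫_B b` of `b` over the ball `B = ball c r`. -/
noncomputable def ballAvg (n : ℕ) (b : EuclideanSpace ℝ (Fin n) → ℝ)
    (c : EuclideanSpace ℝ (Fin n)) (r : ℝ) : ℝ :=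
  (volume (ball c r)).toReal⁻¹ * ∫ y in ball c r, b y

/-- pointwise estimate
`|[b, M_α] f (x)| ≤ M_{α,b} f (x) + 2 b⁻(x) M_α f (x)` for arbitrary `b`. -/
theorem stmt8 (n : ℕ) (hn : 1 ≤ n) (α : ℝ) (hα0 : 0 ≤ α) (hαn : α < n)
    (b : EuclideanSpace ℝ (Fin n) → ℝ) (hb : LocallyIntegrable b volume)
    (f : EuclideanSpace ℝ (Fin n) → ℝ) (hf : LocallyIntegrable f volume)
    (x : EuclideanSpace ℝ (Fin n))
    (h1 : fracMax n α f x ≠ ⊤) (h2 : fracMaxComm n α b f x ≠ ⊤) :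
    |b x * (fracMax n α f x).toReal - (fracMax n α (fun y => b y * f y) x).toReal| ≤
      (fracMaxComm n α b f x).toReal +
        2 * max (-(b x)) 0 * (fracMax n α f x).toReal := by
  have hfm : AEMeasurable (fun y => (‖f y‖₊ : ℝ≥0∞)) volume :=
    hf.aestronglyMeasurable.enorm
  have hbfm : AEMeasurable (fun y => (‖b y * f y‖₊ : ℝ≥0∞)) volume :=
    (hb.aestronglyMeasurable.mul hf.aestronglyMeasurable).enorm
  -- Lemma A
  have keyA : fracMax n α (fun y => b y * f y) x ≤
      (‖b x‖₊ : ℝ≥0∞) * fracMax n α f x + fracMaxComm n α b f x := by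
    refine iSup_le fun c => iSup_le fun r => iSup_le fun hr => iSup_le fun hx => ?_
    have hpt : ∀ y, (‖b y * f y‖₊ : ℝ≥0∞) ≤
        (‖b x‖₊ : ℝ≥0∞) * ‖f y‖₊ + (‖b x - b y‖₊ : ℝ≥0∞) * ‖f y‖₊ := by
      intro y
      have h : ‖b y‖₊ ≤ ‖b x‖₊ + ‖b x - b y‖₊ := by
        have := nnnorm_sub_le (b x) (b x - b y)
        simpa using this
      calc (‖b y * f y‖₊ : ℝ≥0∞) = (‖b y‖₊ : ℝ≥0∞) * ‖f y‖₊ := by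
            rw [nnnorm_mul]; push_cast; ring
        _ ≤ ((‖b x‖₊ : ℝ≥0∞) + ‖b x - b y‖₊) * ‖f y‖₊ := by
            gcongr; exact_mod_cast h
        _ = (‖b x‖₊ : ℝ≥0∞) * ‖f y‖₊ + (‖b x - b y‖₊ : ℝ≥0∞) * ‖f y‖₊ := by
            ring
    have hint : ∫⁻ y in ball c r, (‖b y * f y‖₊ : ℝ≥0∞) ≤
        (‖b x‖₊ : ℝ≥0∞) * (∫⁻ y in ball c r, (‖f y‖₊ : ℝ≥0∞)) +
          ∫⁻ y in ball c r, (‖b x - b y‖₊ : ℝ≥0∞) * ‖f y‖₊ := by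
      calc ∫⁻ y in ball c r, (‖b y * f y‖₊ : ℝ≥0∞)
          ≤ ∫⁻ y in ball c r,
              ((‖b x‖₊ : ℝ≥0∞) * ‖f y‖₊ + (‖b x - b y‖₊ : ℝ≥0∞) * ‖f y‖₊) :=
            lintegral_mono fun y => hpt y
        _ = (∫⁻ y in ball c r, (‖b x‖₊ : ℝ≥0∞) * ‖f y‖₊) +
              ∫⁻ y in ball c r, (‖b x - b y‖₊ : ℝ≥0∞) * ‖f y‖₊ :=
            lintegral_add_left' ((hfm.restrict).const_mul _) _
        _ = (‖b x‖₊ : ℝ≥0∞) * (∫⁻ y in ball c r, (‖f y‖₊ : ℝ≥0∞)) +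
              ∫⁻ y in ball c r, (‖b x - b y‖₊ : ℝ≥0∞) * ‖f y‖₊ := by
            rw [lintegral_const_mul' _ _ ENNReal.coe_ne_top]
    calc volume (ball c r) ^ (α / n - 1) * ∫⁻ y in ball c r, (‖b y * f y‖₊ : ℝ≥0∞)
        ≤ (‖b x‖₊ : ℝ≥0∞) *
            (volume (ball c r) ^ (α / n - 1) * ∫⁻ y in ball c r, (‖f y‖₊ : ℝ≥0∞)) +
            volume (ball c r) ^ (α / n - 1) *
              ∫⁻ y in ball c r, (‖b x - b y‖₊ : ℝ≥0∞) * ‖f y‖₊ := by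
          calc volume (ball c r) ^ (α / n - 1) * ∫⁻ y in ball c r, (‖b y * f y‖₊ : ℝ≥0∞)
              ≤ volume (ball c r) ^ (α / n - 1) *
                ((‖b x‖₊ : ℝ≥0∞) * (∫⁻ y in ball c r, (‖f y‖₊ : ℝ≥0∞)) +
                  ∫⁻ y in ball c r, (‖b x - b y‖₊ : ℝ≥0∞) * ‖f y‖₊) := by gcongr
            _ = _ := by rw [mul_add, mul_left_comm]
      _ ≤ (‖b x‖₊ : ℝ≥0∞) * fracMax n α f x + fracMaxComm n α b f x := by
          gcongr
          · exact le_iSup_of_le c <| le_iSup_of_le r <| le_iSup_of_le hr <|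
              le_iSup_of_le hx le_rfl
          · exact le_iSup_of_le c <| le_iSup_of_le r <| le_iSup_of_le hr <|
              le_iSup_of_le hx le_rfl
  -- Lemma B
  have keyB : (‖b x‖₊ : ℝ≥0∞) * fracMax n α f x ≤
      fracMax n α (fun y => b y * f y) x + fracMaxComm n α b f x := by
    rw [fracMax, ENNReal.mul_iSup]
    refine iSup_le fun c => ?_
    rw [ENNReal.mul_iSup]
    refine iSup_le fun r => ?_
    rw [ENNReal.mul_iSup]
    refine iSup_le fun hr => ?_
    rw [ENNReal.mul_iSup]
    refine iSup_le fun hx => ?_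
    have hpt : ∀ y, (‖b x‖₊ : ℝ≥0∞) * ‖f y‖₊ ≤
        (‖b y * f y‖₊ : ℝ≥0∞) + (‖b x - b y‖₊ : ℝ≥0∞) * ‖f y‖₊ := by
      intro y
      have h : ‖b x‖₊ ≤ ‖b y‖₊ + ‖b x - b y‖₊ := by
        have := nnnorm_sub_le (b x - b y) (- b y)
        simpa [nnnorm_neg, add_comm] using this
      calc (‖b x‖₊ : ℝ≥0∞) * ‖f y‖₊
          ≤ ((‖b y‖₊ : ℝ≥0∞) + ‖b x - b y‖₊) * ‖f y‖₊ := by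
            gcongr; exact_mod_cast h
        _ = (‖b y * f y‖₊ : ℝ≥0∞) + (‖b x - b y‖₊ : ℝ≥0∞) * ‖f y‖₊ := by
            rw [nnnorm_mul]; push_cast; ring
    have hint : (‖b x‖₊ : ℝ≥0∞) * (∫⁻ y in ball c r, (‖f y‖₊ : ℝ≥0∞)) ≤
        (∫⁻ y in ball c r, (‖b y * f y‖₊ : ℝ≥0∞)) +
          ∫⁻ y in ball c r, (‖b x - b y‖₊ : ℝ≥0∞) * ‖f y‖₊ := by
      rw [← lintegral_const_mul' _ _ ENNReal.coe_ne_top,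
        ← lintegral_add_left' (hbfm.restrict)]
      exact lintegral_mono fun y => hpt y
    calc (‖b x‖₊ : ℝ≥0∞) *
          (volume (ball c r) ^ (α / n - 1) * ∫⁻ y in ball c r, (‖f y‖₊ : ℝ≥0∞))
        ≤ volume (ball c r) ^ (α / n - 1) *
            ((∫⁻ y in ball c r, (‖b y * f y‖₊ : ℝ≥0∞)) +
              ∫⁻ y in ball c r, (‖b x - b y‖₊ : ℝ≥0∞) * ‖f y‖₊) := by
          rw [mul_left_comm]; gcongr
      _ = volume (ball c r) ^ (α / n - 1) *
            (∫⁻ y in ball c r, (‖b y * f y‖₊ : ℝ≥0∞)) +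
          volume (ball c r) ^ (α / n - 1) *
            ∫⁻ y in ball c r, (‖b x - b y‖₊ : ℝ≥0∞) * ‖f y‖₊ := mul_add _ _ _
      _ ≤ fracMax n α (fun y => b y * f y) x + fracMaxComm n α b f x := by
          gcongr
          · exact le_iSup_of_le c <| le_iSup_of_le r <| le_iSup_of_le hr <|
              le_iSup_of_le hx le_rfl
          · exact le_iSup_of_le c <| le_iSup_of_le r <| le_iSup_of_le hr <|
              le_iSup_of_le hx le_rfl
  -- finiteness
  have hfin : fracMax n α (fun y => b y * f y) x ≠ ⊤ :=
    ne_top_of_le_ne_top (ENNReal.add_ne_top.2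
      ⟨ENNReal.mul_ne_top ENNReal.coe_ne_top h1, h2⟩) keyA
  set M := (fracMax n α f x).toReal with hM
  set N := (fracMax n α (fun y => b y * f y) x).toReal with hN
  set C := (fracMaxComm n α b f x).toReal with hC
  have hM0 : 0 ≤ M := ENNReal.toReal_nonneg
  have hC0 : 0 ≤ C := ENNReal.toReal_nonneg
  have habs : ‖b x‖₊.toReal = |b x| := by
    simp [Real.norm_eq_abs]
  have hA' : N ≤ |b x| * M + C := by
    have := ENNReal.toReal_mono (ENNReal.add_ne_top.2
      ⟨ENNReal.mul_ne_top ENNReal.coe_ne_top h1, h2⟩) keyA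
    rwa [ENNReal.toReal_add (ENNReal.mul_ne_top ENNReal.coe_ne_top h1) h2,
      ENNReal.toReal_mul, ENNReal.coe_toReal, habs] at this
  have hB' : |b x| * M ≤ N + C := by
    have := ENNReal.toReal_mono (ENNReal.add_ne_top.2 ⟨hfin, h2⟩) keyB
    rwa [ENNReal.toReal_add hfin h2, ENNReal.toReal_mul, ENNReal.coe_toReal,
      habs] at this
  rcases le_or_gt 0 (b x) with hbx | hbx
  · rw [abs_of_nonneg hbx] at hA' hB'
    rw [max_eq_right (by linarith), abs_le]
    constructor <;> nlinarith
  · rw [abs_of_neg hbx] at hA' hB'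
    rw [max_eq_left (by linarith), abs_le]
    constructor <;> nlinarith
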